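/- Let F(t₁,t₂,t₃) = (1/12)t₃t₁³ + (1/2)t₁t₂t₃ + t₂³/12 + (1/4)t₃²·log t₃ on the domain U = {(t₁,t₂,t₃) ∈ ℝ³ : t₃ > 0}. Let c_{ijk}(t) = ∂³F/∂t_i∂t_j∂t_k and define η_{ij} = c_{2ij}. Then: (a) η is the constant matrix with η₁₃ = η₃₁ = 1/2, η₂₂ = 1/2 and all other entries 0 (in particular η is invertible); (b) (WDVV equations) for all t ∈ U and all indices i, j, q, n ∈ {1,2,3}: Σ_{k,p=1}^{3} c_{ijk}(t)·η^{kp}·c_{pqn}(t) = Σ_{k,p=1}^{3} c_{njk}(t)·η^{kp}·c_{pqi}(t), where (η^{kp}) is the inverse matrix of (η_{ij}); (c) (quasihomogeneity) for all t ∈ U: (1/2)t₁·∂₁F + t₂·∂₂F + (3/2)t₃·∂₃F = 3F + (3/8)t₃². (Thus F is the potential of the logarithmic Dubrovin–Frobenius manifold constructed from the unconstrained Adler–Gelfand–Dickey bracket for gl₃, with unit field ∂_{t₂} and Euler field E = (1/2)t₁∂₁ + t₂∂₂ + (3/2)t₃∂₃.) -/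

import Mathlib

open Matrix

/-- Partial derivative of `f : (Fin 3 → ℝ) → ℝ` in the `i`-th coordinate direction. -/
noncomputable def pd3 (i : Fin 3) (f : (Fin 3 → ℝ) → ℝ) : (Fin 3 → ℝ) → ℝ :=
  fun x => fderiv ℝ f x (Pi.single i 1)

/-- The potential `F = (1/12)t₃t₁³ + (1/2)t₁t₂t₃ + t₂³/12 + (1/4)t₃²·log t₃`
(coordinates `t₁,t₂,t₃` are `t 0, t 1, t 2`). -/
noncomputable def F3 : (Fin 3 → ℝ) → ℝ := fun t =>
  (1 / 12) * t 2 * (t 0) ^ 3 + (1 / 2) * t 0 * t 1 * t 2 + (t 1) ^ 3 / 12 +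
    (1 / 4) * (t 2) ^ 2 * Real.log (t 2)

/-- `c_{ijk}(t) = ∂³F/∂t_i∂t_j∂t_k`. -/
noncomputable def c3 (i j k : Fin 3) : (Fin 3 → ℝ) → ℝ := pd3 i (pd3 j (pd3 k F3))

/-- The flat metric `η` with `η₁₃ = η₃₁ = η₂₂ = 1/2` and all other entries `0`. -/
noncomputable def eta3 : Matrix (Fin 3) (Fin 3) ℝ :=
  !![0, 0, 1/2; 0, 1/2, 0; 1/2, 0, 0]

/- ### Auxiliary machinery -/

lemma pd3_eq {f : (Fin 3 → ℝ) → ℝ} {L : (Fin 3 → ℝ) →L[ℝ] ℝ} {x : Fin 3 → ℝ} (i : Fin 3)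
    (hf : HasFDerivAt f L x) : pd3 i f x = L (Pi.single i 1) := by
  rw [pd3, hf.fderiv]

/-- Explicit first partial derivatives of `F3`. -/
noncomputable def gfun : Fin 3 → (Fin 3 → ℝ) → ℝ
  | 0 => fun t => (1/4) * t 2 * t 0 ^ 2 + (1/2) * t 1 * t 2
  | 1 => fun t => (1/2) * t 0 * t 2 + t 1 ^ 2 / 4
  | 2 => fun t => (1/12) * t 0 ^ 3 + (1/2) * t 0 * t 1 + (1/2) * t 2 * Real.log (t 2) + (1/4) * t 2

/-- Explicit second partial derivatives of `F3`. -/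
noncomputable def hfun : Fin 3 → Fin 3 → (Fin 3 → ℝ) → ℝ
  | 0, 0 => fun t => (1/2) * t 2 * t 0
  | 0, 1 => fun t => (1/2) * t 2
  | 0, 2 => fun t => (1/4) * t 0 ^ 2 + (1/2) * t 1
  | 1, 0 => fun t => (1/2) * t 2
  | 1, 1 => fun t => t 1 / 2
  | 1, 2 => fun t => (1/2) * t 0
  | 2, 0 => fun t => (1/4) * t 0 ^ 2 + (1/2) * t 1
  | 2, 1 => fun t => (1/2) * t 0
  | 2, 2 => fun t => (1/2) * Real.log (t 2) + 3/4

/-- Explicit third partial derivatives of `F3`. -/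
noncomputable def cval (i j k : Fin 3) (t : Fin 3 → ℝ) : ℝ :=
  ![![![t 2/2, 0, t 0/2], ![0, 0, 1/2], ![t 0/2, 1/2, 0]],
    ![![0, 0, 1/2], ![0, 1/2, 0], ![1/2, 0, 0]],
    ![![t 0/2, 1/2, 0], ![1/2, 0, 0], ![0, 0, 1/(2 * t 2)]]] i j k

lemma pdF (x : Fin 3 → ℝ) (hx : 0 < x 2) (k : Fin 3) : pd3 k F3 x = gfun k x := by
  have h0 := hasFDerivAt_apply (𝕜 := ℝ) 0 x
  have h1 := hasFDerivAt_apply (𝕜 := ℝ) 1 x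
  have h2 := hasFDerivAt_apply (𝕜 := ℝ) 2 x
  have p0 := (hasDerivAt_pow 3 (x 0)).comp_hasFDerivAt x h0
  have p1 := (hasDerivAt_pow 3 (x 1)).comp_hasFDerivAt x h1
  have p2 := (hasDerivAt_pow 2 (x 2)).comp_hasFDerivAt x h2
  have h := ((((h2.const_mul ((1:ℝ)/12)).mul p0).add
      (((h0.const_mul ((1:ℝ)/2)).mul h1).mul h2)).add (p1.mul_const (12:ℝ)⁻¹)).add
      ((p2.const_mul ((1:ℝ)/4)).mul (h2.log hx.ne'))
  have h' : HasFDerivAt F3 _ x := h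
  rw [pd3_eq k h']
  fin_cases k <;> simp [gfun, Pi.single_apply, Fin.ext_iff] <;> field_simp [hx.ne'] <;> ring

lemma pdG (x : Fin 3 → ℝ) (hx : 0 < x 2) (j k : Fin 3) : pd3 j (gfun k) x = hfun j k x := by
  have h0 := hasFDerivAt_apply (𝕜 := ℝ) 0 x
  have h1 := hasFDerivAt_apply (𝕜 := ℝ) 1 x
  have h2 := hasFDerivAt_apply (𝕜 := ℝ) 2 x
  have p03 := (hasDerivAt_pow 3 (x 0)).comp_hasFDerivAt x h0
  have p02 := (hasDerivAt_pow 2 (x 0)).comp_hasFDerivAt x h0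
  have p12 := (hasDerivAt_pow 2 (x 1)).comp_hasFDerivAt x h1
  fin_cases k
  · show pd3 j (gfun 0) x = hfun j 0 x
    have h' : HasFDerivAt (gfun 0) _ x :=
      ((h2.const_mul ((1:ℝ)/4)).mul p02).add ((h1.const_mul ((1:ℝ)/2)).mul h2)
    rw [pd3_eq j h']
    fin_cases j <;> simp [hfun, Pi.single_apply, Fin.ext_iff] <;> ring
  · show pd3 j (gfun 1) x = hfun j 1 x
    have h' : HasFDerivAt (gfun 1) _ x :=
      ((h0.const_mul ((1:ℝ)/2)).mul h2).add (p12.mul_const (4:ℝ)⁻¹)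
    rw [pd3_eq j h']
    fin_cases j <;> simp [hfun, Pi.single_apply, Fin.ext_iff] <;> ring
  · show pd3 j (gfun 2) x = hfun j 2 x
    have h' : HasFDerivAt (gfun 2) _ x :=
      (((p03.const_mul ((1:ℝ)/12)).add ((h0.const_mul ((1:ℝ)/2)).mul h1)).add
        ((h2.const_mul ((1:ℝ)/2)).mul (h2.log hx.ne'))).add (h2.const_mul ((1:ℝ)/4))
    rw [pd3_eq j h']
    fin_cases j <;> simp [hfun, Pi.single_apply, Fin.ext_iff] <;> field_simp [hx.ne'] <;> ring

lemma pdH (x : Fin 3 → ℝ) (hx : 0 < x 2) (i j k : Fin 3) : pd3 i (hfun j k) x = cval i j k x := by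
  have h0 := hasFDerivAt_apply (𝕜 := ℝ) 0 x
  have h1 := hasFDerivAt_apply (𝕜 := ℝ) 1 x
  have h2 := hasFDerivAt_apply (𝕜 := ℝ) 2 x
  have p02 := (hasDerivAt_pow 2 (x 0)).comp_hasFDerivAt x h0
  fin_cases j <;> fin_cases k
  · show pd3 i (hfun 0 0) x = cval i 0 0 x
    have h' : HasFDerivAt (hfun 0 0) _ x := (h2.const_mul ((1:ℝ)/2)).mul h0
    rw [pd3_eq i h']
    fin_cases i <;> simp [cval, Matrix.vecHead, Matrix.vecTail, Pi.single_apply, Fin.ext_iff] <;> ring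
  · show pd3 i (hfun 0 1) x = cval i 0 1 x
    have h' : HasFDerivAt (hfun 0 1) _ x := h2.const_mul ((1:ℝ)/2)
    rw [pd3_eq i h']
    fin_cases i <;> simp [cval, Matrix.vecHead, Matrix.vecTail, Pi.single_apply, Fin.ext_iff] <;> ring
  · show pd3 i (hfun 0 2) x = cval i 0 2 x
    have h' : HasFDerivAt (hfun 0 2) _ x :=
      (p02.const_mul ((1:ℝ)/4)).add (h1.const_mul ((1:ℝ)/2))
    rw [pd3_eq i h']
    fin_cases i <;> simp [cval, Matrix.vecHead, Matrix.vecTail, Pi.single_apply, Fin.ext_iff] <;> ring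
  · show pd3 i (hfun 1 0) x = cval i 1 0 x
    have h' : HasFDerivAt (hfun 1 0) _ x := h2.const_mul ((1:ℝ)/2)
    rw [pd3_eq i h']
    fin_cases i <;> simp [cval, Matrix.vecHead, Matrix.vecTail, Pi.single_apply, Fin.ext_iff] <;> ring
  · show pd3 i (hfun 1 1) x = cval i 1 1 x
    have h' : HasFDerivAt (hfun 1 1) _ x := h1.mul_const (2:ℝ)⁻¹
    rw [pd3_eq i h']
    fin_cases i <;> simp [cval, Matrix.vecHead, Matrix.vecTail, Pi.single_apply, Fin.ext_iff] <;> ring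
  · show pd3 i (hfun 1 2) x = cval i 1 2 x
    have h' : HasFDerivAt (hfun 1 2) _ x := h0.const_mul ((1:ℝ)/2)
    rw [pd3_eq i h']
    fin_cases i <;> simp [cval, Matrix.vecHead, Matrix.vecTail, Pi.single_apply, Fin.ext_iff] <;> ring
  · show pd3 i (hfun 2 0) x = cval i 2 0 x
    have h' : HasFDerivAt (hfun 2 0) _ x :=
      (p02.const_mul ((1:ℝ)/4)).add (h1.const_mul ((1:ℝ)/2))
    rw [pd3_eq i h']
    fin_cases i <;> simp [cval, Matrix.vecHead, Matrix.vecTail, Pi.single_apply, Fin.ext_iff] <;> ring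
  · show pd3 i (hfun 2 1) x = cval i 2 1 x
    have h' : HasFDerivAt (hfun 2 1) _ x := h0.const_mul ((1:ℝ)/2)
    rw [pd3_eq i h']
    fin_cases i <;> simp [cval, Matrix.vecHead, Matrix.vecTail, Pi.single_apply, Fin.ext_iff] <;> ring
  · show pd3 i (hfun 2 2) x = cval i 2 2 x
    have h' : HasFDerivAt (hfun 2 2) _ x :=
      ((h2.log hx.ne').const_mul ((1:ℝ)/2)).add (hasFDerivAt_const ((3:ℝ)/4) x)
    rw [pd3_eq i h']
    fin_cases i <;> simp [cval, Matrix.vecHead, Matrix.vecTail, Pi.single_apply, Fin.ext_iff] <;> field_simp [hx.ne'] <;> ring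

lemma c3_eq (t : Fin 3 → ℝ) (ht : 0 < t 2) (i j k : Fin 3) : c3 i j k t = cval i j k t := by
  have hopen : IsOpen {s : Fin 3 → ℝ | 0 < s 2} := isOpen_lt continuous_const (continuous_apply 2)
  have hU : ∀ᶠ s in nhds t, 0 < s 2 := hopen.mem_nhds ht
  have hU' : ∀ᶠ s in nhds t, ∀ᶠ u in nhds s, 0 < u 2 := hU.eventually_nhds
  have e2 : pd3 j (pd3 k F3) =ᶠ[nhds t] hfun j k := by
    filter_upwards [hU, hU'] with s hs hs'
    have e1s : pd3 k F3 =ᶠ[nhds s] gfun k := hs'.mono fun u hu => pdF u hu k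
    calc pd3 j (pd3 k F3) s = pd3 j (gfun k) s := by
          show fderiv ℝ (pd3 k F3) s (Pi.single j 1) = fderiv ℝ (gfun k) s (Pi.single j 1)
          rw [e1s.fderiv_eq]
      _ = hfun j k s := pdG s hs j k
  calc c3 i j k t = pd3 i (hfun j k) t := by
        show fderiv ℝ (pd3 j (pd3 k F3)) t (Pi.single i 1) = fderiv ℝ (hfun j k) t (Pi.single i 1)
        rw [e2.fderiv_eq]
    _ = cval i j k t := pdH t ht i j k

lemma eta3_inv : eta3⁻¹ = !![0, 0, 2; 0, 2, 0; 2, 0, 0] := by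
  apply Matrix.inv_eq_right_inv
  ext i j
  fin_cases i <;> fin_cases j <;>
    simp [eta3, Matrix.mul_apply, Fin.sum_univ_three, Matrix.vecHead, Matrix.vecTail, Matrix.one_apply, Fin.ext_iff] <;> norm_num

set_option maxHeartbeats 2000000 in
/-- on `U = {t₃ > 0}`: (a) `c_{2ij} = η_{ij}` is the stated constant
invertible matrix; (b) the WDVV equations hold; (c) quasihomogeneity:
`(1/2)t₁∂₁F + t₂∂₂F + (3/2)t₃∂₃F = 3F + (3/8)t₃²`. -/
theorem gl3_frobenius_potential :
    ((∀ t : Fin 3 → ℝ, 0 < t 2 → ∀ i j : Fin 3, c3 1 i j t = eta3 i j) ∧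
      IsUnit eta3) ∧
    (∀ t : Fin 3 → ℝ, 0 < t 2 → ∀ i j q n : Fin 3,
      ∑ k : Fin 3, ∑ p : Fin 3, c3 i j k t * eta3⁻¹ k p * c3 p q n t =
        ∑ k : Fin 3, ∑ p : Fin 3, c3 n j k t * eta3⁻¹ k p * c3 p q i t) ∧
    (∀ t : Fin 3 → ℝ, 0 < t 2 →
      (1 / 2) * t 0 * pd3 0 F3 t + t 1 * pd3 1 F3 t + (3 / 2) * t 2 * pd3 2 F3 t =
        3 * F3 t + (3 / 8) * (t 2) ^ 2) := by
  refine ⟨⟨fun t ht i j => ?_, ?_⟩, fun t ht i j q n => ?_, fun t ht => ?_⟩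
  · rw [c3_eq t ht 1 i j]
    fin_cases i <;> fin_cases j <;> norm_num [cval, eta3, Matrix.vecHead, Matrix.vecTail]
  · rw [Matrix.isUnit_iff_isUnit_det]
    simp [eta3, Matrix.det_fin_three]
  · have hne : t 2 ≠ 0 := ht.ne'
    have hrw : ∀ a b c : Fin 3, c3 a b c t = cval a b c t := fun a b c => c3_eq t ht a b c
    simp only [eta3_inv, Fin.sum_univ_three, hrw, cval, Matrix.cons_val_zero, Matrix.cons_val_one,
      Matrix.head_cons, Matrix.cons_val_two, Matrix.tail_cons, Matrix.head_fin_const,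
      Matrix.of_apply, Matrix.cons_val', Matrix.empty_val', Matrix.cons_val_fin_one]
    fin_cases i <;> fin_cases j <;> fin_cases q <;> fin_cases n <;>
      simp only [Matrix.cons_val_zero, Matrix.cons_val_one, Matrix.head_cons,
        Matrix.cons_val_two, Matrix.tail_cons, Fin.isValue, Fin.zero_eta, Fin.mk_one, Fin.reduceFinMk, Matrix.vecHead] <;>
      field_simp <;> ring
  · rw [pdF t ht 0, pdF t ht 1, pdF t ht 2]
    simp only [gfun, F3]
    ring
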